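/- Let T ⊆ R_l be the ℤ-subalgebra generated by the l fundamental characters χ(1,0), χ(1,2), …, χ(1,2l−2). Then χ(k,a) ∈ T for every k ∈ ℕ and every even integer a, and Z ∈ T. (This is the character-level content of Proposition 2.5: every Kirillov–Reshetikhin character and the coefficient Z are polynomials with integer coefficients in the fundamental characters, so the monomials in the fundamental characters span the Grothendieck ring.) -/
import Mathlib


/-!
`Rl l` is the Laurent polynomial ring over `ℤ` in `l` commuting variables
`Y_0, Y_2, …, Y_{2l−2}`, with the index of `Y` read modulo `2l`.  It is realised
as the group algebra of the free abelian group `ZMod l →₀ ℤ`, the variable with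
even index `n` corresponding to the residue `n/2` modulo `l`.
-/

/-- The Laurent polynomial ring `ℤ[Y_0^{±1}, Y_2^{±1}, …, Y_{2l−2}^{±1}]`,
indices read modulo `2l`. -/
abbrev Rl (l : ℕ) : Type := AddMonoidAlgebra ℤ (ZMod l →₀ ℤ)

/-- The monomial `Y_n^e` (for `n` an even integer, read modulo `2l`). -/
noncomputable def Y (l : ℕ) (n e : ℤ) : Rl l :=
  AddMonoidAlgebra.single (Finsupp.single ((n / 2 : ℤ) : ZMod l) e) 1

/-- The `ε`-character `χ(k,a)` of the Kirillov–Reshetikhin module `W_ε(k,ε^a)`: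
`χ(k,a) = Σ_{i=0}^{k} (Π_{t=0}^{k−1−i} Y_{a+2t}) · (Π_{t=k+1−i}^{k} Y_{a+2t}^{−1})`. -/
noncomputable def chi (l : ℕ) (k : ℕ) (a : ℤ) : Rl l :=
  ∑ i ∈ Finset.range (k + 1),
    (∏ t ∈ Finset.range (k - i), Y l (a + 2 * (t : ℤ)) 1) *
      ∏ t ∈ Finset.Icc (k + 1 - i) k, Y l (a + 2 * (t : ℤ)) (-1)

/-- `Z = Y_0Y_2⋯Y_{2l−2} + (Y_0Y_2⋯Y_{2l−2})^{−1}`, the `ε`-character of the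
Frobenius pullback `z₁ = L(𝐘₁)`. -/
noncomputable def Z (l : ℕ) : Rl l :=
  (∏ t ∈ Finset.range l, Y l (2 * (t : ℤ)) 1) +
    ∏ t ∈ Finset.range l, Y l (2 * (t : ℤ)) (-1)

open Finset

section Aux
variable (l : ℕ)

lemma Y_arg {m n : ℤ} (e : ℤ) (h : m = n) : Y l m e = Y l n e := by rw [h]

lemma Y_congr {m n : ℤ} (e : ℤ) (h : ((m / 2 : ℤ) : ZMod l) = ((n / 2 : ℤ) : ZMod l)) :
    Y l m e = Y l n e := by unfold Y; rw [h]

lemma Y_cancel (n : ℤ) : Y l n 1 * Y l n (-1) = 1 := by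
  simp only [Y, AddMonoidAlgebra.single_mul_single, mul_one, ← Finsupp.single_add]
  norm_num
  exact AddMonoidAlgebra.one_def.symm

lemma chi_zero (a : ℤ) : chi l 0 a = 1 := by
  simp [chi]

lemma chi_one (a : ℤ) : chi l 1 a = Y l a 1 + Y l (a + 2) (-1) := by
  rw [chi]
  rw [Finset.sum_range_succ, Finset.sum_range_succ, Finset.sum_range_zero]
  norm_num

/-- The `i`-th term of `chi l K a`. -/
noncomputable def T (a : ℤ) (K i : ℕ) : Rl l :=
  (∏ t ∈ Finset.range (K - i), Y l (a + 2 * (t : ℤ)) 1) *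
    ∏ t ∈ Finset.Icc (K + 1 - i) K, Y l (a + 2 * (t : ℤ)) (-1)

lemma chi_eq_T (k : ℕ) (a : ℤ) : chi l k a = ∑ i ∈ Finset.range (k + 1), T l a k i := rfl

lemma T_mul_Yinv (a : ℤ) (K i : ℕ) :
    T l a K i * Y l (a + 2 * ((K : ℤ) + 1)) (-1) = T l a (K + 1) (i + 1) := by
  unfold T
  have h1 : K + 1 - (i + 1) = K - i := by omega
  have h2 : K + 1 + 1 - (i + 1) = K + 1 - i := by omega
  rw [h1, h2, Finset.prod_Icc_succ_top (show K + 1 - i ≤ K + 1 by omega)]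
  rw [mul_assoc]
  congr 2

lemma T_mul_Y (a : ℤ) (K i : ℕ) :
    T l a (K + 1) (i + 1) * Y l (a + 2 * ((K : ℤ) + 1)) 1 = T l a K i := by
  rw [← T_mul_Yinv, mul_assoc, mul_comm (Y l _ (-1)), Y_cancel, mul_one]

lemma T_zero_mul_Y (a : ℤ) (K : ℕ) :
    T l a K 0 * Y l (a + 2 * (K : ℤ)) 1 = T l a (K + 1) 0 := by
  unfold T
  simp only [Nat.sub_zero]
  rw [Finset.Icc_eq_empty (show ¬ K + 1 ≤ K by omega),
    Finset.Icc_eq_empty (show ¬ K + 1 + 1 ≤ K + 1 by omega)]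
  simp only [Finset.prod_empty, mul_one]
  rw [Finset.prod_range_succ]

lemma chi_rec (k : ℕ) (a : ℤ) :
    chi l (k + 1) a * chi l 1 (a + 2 * ((k : ℤ) + 1)) =
      chi l (k + 2) a + chi l k a := by
  rw [chi_one, chi_eq_T l (k + 1), mul_add, Finset.sum_mul, Finset.sum_mul]
  have hA : (∑ i ∈ Finset.range (k + 1 + 1), T l a (k + 1) i * Y l (a + 2 * ((k : ℤ) + 1)) 1)
      = chi l k a + T l a (k + 2) 0 := by
    rw [Finset.sum_range_succ']
    congr 1
    · rw [chi_eq_T]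
      exact Finset.sum_congr rfl fun i _ => T_mul_Y l a k i
    · have := T_zero_mul_Y l a (k + 1)
      rw [show ((k + 1 : ℕ) : ℤ) = (k : ℤ) + 1 by push_cast; ring] at this
      exact this
  have hB : (∑ i ∈ Finset.range (k + 1 + 1),
        T l a (k + 1) i * Y l (a + 2 * ((k : ℤ) + 1) + 2) (-1))
      = ∑ i ∈ Finset.range (k + 2), T l a (k + 2) (i + 1) := by
    refine Finset.sum_congr rfl fun i _ => ?_
    have := T_mul_Yinv l a (k + 1) i
    rw [show a + 2 * (((k + 1 : ℕ) : ℤ) + 1) = a + 2 * ((k : ℤ) + 1) + 2 by push_cast; ring] at this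
    exact this
  rw [hA, hB, chi_eq_T l (k + 2), Finset.sum_range_succ' (T l a (k + 2)) (k + 2)]
  ring

lemma chi_shift (k : ℕ) {a b : ℤ} (ha : Even a) (hb : Even b)
    (h : ((a / 2 : ℤ) : ZMod l) = ((b / 2 : ℤ) : ZMod l)) : chi l k a = chi l k b := by
  obtain ⟨c, hc⟩ := ha; obtain ⟨d, hd⟩ := hb
  unfold chi
  refine Finset.sum_congr rfl fun i _ => ?_
  congr 1 <;> refine Finset.prod_congr rfl fun t _ => Y_congr l _ ?_ <;>
  · have e1 : (a + 2 * (t : ℤ)) / 2 = a / 2 + t := by omega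
    have e2 : (b + 2 * (t : ℤ)) / 2 = b / 2 + t := by omega
    rw [e1, e2]
    push_cast
    rw [h]

end Aux

/-- Proposition 2.5 in character form: every Kirillov–Reshetikhin character
`χ(k,a)` (`k ∈ ℕ`, `a` even) and the element `Z` lie in the `ℤ`-subalgebra of
`Rl l` generated by the `l` fundamental characters `χ(1,0), χ(1,2), …, χ(1,2l−2)`. -/
theorem chi_and_Z_in_fundamental_subalgebra (l : ℕ) (hl : 2 ≤ l) :
    (∀ (k : ℕ) (a : ℤ), Even a →
        chi l k a ∈
          Algebra.adjoin ℤ (Set.range fun m : Fin l => chi l 1 (2 * (m : ℤ)))) ∧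
      Z l ∈ Algebra.adjoin ℤ (Set.range fun m : Fin l => chi l 1 (2 * (m : ℤ))) := by
  haveI : NeZero l := ⟨by omega⟩
  set S := Algebra.adjoin ℤ (Set.range fun m : Fin l => chi l 1 (2 * (m : ℤ))) with hS
  have hone : ∀ a : ℤ, Even a → chi l 1 a ∈ S := by
    intro a ha
    set x : ZMod l := ((a / 2 : ℤ) : ZMod l) with hx
    set m : Fin l := ⟨x.val, ZMod.val_lt x⟩ with hm
    have hmx : (((m : ℕ) : ℤ) : ZMod l) = x := by
      push_cast
      exact ZMod.natCast_rightInverse x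
    have hca : chi l 1 a = chi l 1 (2 * (m : ℤ)) := by
      refine chi_shift l 1 ha ⟨(m : ℤ), by ring⟩ ?_
      have h2 : (2 * ((m : ℕ) : ℤ)) / 2 = ((m : ℕ) : ℤ) := by omega
      rw [h2]
      exact hmx.symm
    rw [hca]
    exact Algebra.subset_adjoin ⟨m, rfl⟩
  have hmain : ∀ (k : ℕ) (a : ℤ), Even a → chi l k a ∈ S := by
    intro k
    induction k using Nat.strong_induction_on with
    | _ k ih =>
      match k with
      | 0 => intro a _; rw [chi_zero]; exact one_mem S
      | 1 => exact hone
      | (k + 2) =>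
        intro a ha
        have hrec : chi l (k + 2) a =
            chi l (k + 1) a * chi l 1 (a + 2 * ((k : ℤ) + 1)) - chi l k a :=
          eq_sub_of_add_eq (chi_rec l k a).symm
        rw [hrec]
        refine sub_mem (mul_mem (ih (k + 1) (by omega) a ha) (hone _ ?_))
          (ih k (by omega) a ha)
        obtain ⟨c, hc⟩ := ha
        exact ⟨c + (k + 1), by rw [hc]; push_cast; ring⟩
  refine ⟨hmain, ?_⟩
  obtain ⟨n, hn⟩ : ∃ n, l = n + 2 := ⟨l - 2, by omega⟩
  subst hn
  have hY0 : ∀ (m m' e : ℤ), m / 2 = ((n + 2 : ℕ) : ℤ) → m' / 2 = 0 →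
      Y (n + 2) m e = Y (n + 2) m' e := by
    intro m m' e hm hm'
    refine Y_congr _ e ?_
    rw [hm, hm', Int.cast_natCast, ZMod.natCast_self, Int.cast_zero]
  have hZ : chi (n + 2) (n + 2) 0 = Z (n + 2) + chi (n + 2) n 2 := by
    rw [chi_eq_T, Finset.sum_range_succ, Finset.sum_range_succ']
    have c1 : T (n + 2) 0 (n + 2) 0 = ∏ t ∈ Finset.range (n + 2), Y (n + 2) (2 * (t : ℤ)) 1 := by
      unfold T
      rw [Nat.sub_zero, Finset.Icc_eq_empty (show ¬ n + 2 + 1 - 0 ≤ n + 2 by omega),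
        Finset.prod_empty, mul_one]
      exact Finset.prod_congr rfl fun t _ => Y_arg _ 1 (by ring)
    have c2 : T (n + 2) 0 (n + 2) (n + 2)
        = ∏ t ∈ Finset.range (n + 2), Y (n + 2) (2 * (t : ℤ)) (-1) := by
      unfold T
      rw [show n + 2 - (n + 2) = 0 by omega, show n + 2 + 1 - (n + 2) = 1 by omega,
        Finset.range_zero, Finset.prod_empty, one_mul]
      rw [show Finset.Icc 1 (n + 2) = Finset.Ico 1 (n + 2 + 1) by rw [Finset.Ico_add_one_right_eq_Icc],
        Finset.prod_Ico_eq_prod_range,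
        show n + 2 + 1 - 1 = n + 2 from rfl]
      have hL : (∏ t ∈ Finset.range (n + 2), Y (n + 2) (0 + 2 * ((1 + t : ℕ) : ℤ)) (-1))
          = (∏ t ∈ Finset.range (n + 1), Y (n + 2) (0 + 2 * ((1 + t : ℕ) : ℤ)) (-1)) *
              Y (n + 2) (0 + 2 * ((1 + (n + 1) : ℕ) : ℤ)) (-1) :=
        Finset.prod_range_succ _ (n + 1)
      have hR : (∏ t ∈ Finset.range (n + 2), Y (n + 2) (2 * (t : ℤ)) (-1))
          = (∏ t ∈ Finset.range (n + 1), Y (n + 2) (2 * ((t + 1 : ℕ) : ℤ)) (-1)) *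
              Y (n + 2) (2 * ((0 : ℕ) : ℤ)) (-1) :=
        Finset.prod_range_succ' _ (n + 1)
      rw [hL, hR]
      congr 1
      · exact Finset.prod_congr rfl fun t _ => Y_arg _ (-1) (by push_cast; ring)
      · exact hY0 _ _ (-1) (by push_cast; omega) (by norm_num)
    have c3 : ∀ i ∈ Finset.range (n + 1), T (n + 2) 0 (n + 2) (i + 1) = T (n + 2) 2 n i := by
      intro i hi
      have hin : i ≤ n := by
        have := Finset.mem_range.mp hi; omega
      unfold T
      rw [show n + 2 - (i + 1) = (n - i) + 1 by omega,
        show n + 2 + 1 - (i + 1) = n + 2 - i by omega,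
        show Finset.Icc (n + 2 - i) (n + 2) = Finset.Ico (n + 2 - i) (n + 2 + 1) by
          rw [Finset.Ico_add_one_right_eq_Icc],
        show Finset.Icc (n + 1 - i) n = Finset.Ico (n + 1 - i) (n + 1) by
          rw [Finset.Ico_add_one_right_eq_Icc],
        Finset.prod_Ico_eq_prod_range, Finset.prod_Ico_eq_prod_range,
        show n + 2 + 1 - (n + 2 - i) = i + 1 by omega,
        show n + 1 - (n + 1 - i) = i by omega,
        Finset.prod_range_succ' (fun t => Y (n + 2) (0 + 2 * (t : ℤ)) 1) (n - i),
        Finset.prod_range_succ (fun t => Y (n + 2) (0 + 2 * ((n + 2 - i + t : ℕ) : ℤ)) (-1)) i]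
      have htop : Y (n + 2) (0 + 2 * ((n + 2 - i + i : ℕ) : ℤ)) (-1) = Y (n + 2) 0 (-1) :=
        hY0 _ _ (-1) (by push_cast; omega) (by norm_num)
      rw [htop]
      have hA : (∏ t ∈ Finset.range (n - i), Y (n + 2) (0 + 2 * ((t + 1 : ℕ) : ℤ)) 1)
          = ∏ t ∈ Finset.range (n - i), Y (n + 2) (2 + 2 * (t : ℤ)) 1 :=
        Finset.prod_congr rfl fun t _ => Y_arg _ 1 (by push_cast; ring)
      have hB : (∏ t ∈ Finset.range i, Y (n + 2) (0 + 2 * ((n + 2 - i + t : ℕ) : ℤ)) (-1))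
          = ∏ t ∈ Finset.range i, Y (n + 2) (2 + 2 * ((n + 1 - i + t : ℕ) : ℤ)) (-1) :=
        Finset.prod_congr rfl fun t _ => Y_arg _ (-1) (by
          have h1 : ((n + 2 - i + t : ℕ) : ℤ) = (n : ℤ) + 2 - i + t := by omega
          have h2 : ((n + 1 - i + t : ℕ) : ℤ) = (n : ℤ) + 1 - i + t := by omega
          rw [h1, h2]; ring)
      rw [hA, hB,
        show Y (n + 2) (0 + 2 * ((0 : ℕ) : ℤ)) 1 = Y (n + 2) 0 1 from Y_arg _ 1 (by norm_num)]
      calc ((∏ t ∈ Finset.range (n - i), Y (n + 2) (2 + 2 * (t : ℤ)) 1) * Y (n + 2) 0 1) *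
            ((∏ t ∈ Finset.range i, Y (n + 2) (2 + 2 * ((n + 1 - i + t : ℕ) : ℤ)) (-1)) *
              Y (n + 2) 0 (-1))
          = ((∏ t ∈ Finset.range (n - i), Y (n + 2) (2 + 2 * (t : ℤ)) 1) *
              (∏ t ∈ Finset.range i, Y (n + 2) (2 + 2 * ((n + 1 - i + t : ℕ) : ℤ)) (-1))) *
              (Y (n + 2) 0 1 * Y (n + 2) 0 (-1)) := by ring
        _ = _ := by rw [Y_cancel, mul_one]
    rw [Finset.sum_congr rfl c3, c1, c2, chi_eq_T, Z]
    ring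
  have h1 : chi (n + 2) (n + 2) 0 ∈ S := hmain (n + 2) 0 (Even.zero)
  have h2 : chi (n + 2) n 2 ∈ S := hmain n 2 ⟨1, rfl⟩
  have hsub : Z (n + 2) = chi (n + 2) (n + 2) 0 - chi (n + 2) n 2 := by
    rw [hZ]; ring
  rw [hsub]
  exact sub_mem h1 h2
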